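/- Let S = {(0,0),(4,0),(0,4),(4,5),(5,4)} ⊂ ℝ² with the metric d((x₁,x₂),(y₁,y₂)) = |x₁−y₁| + |x₂−y₂|, and define T(x₁,x₂) = (x₁,0) if x₁ ≤ x₂ and T(x₁,x₂) = (0,x₂) if x₂ < x₁. Then there exists no m ∈ [0,1) such that d(Ta,Tb) ≤ m·d(a,b) for all a,b ∈ S; in particular, T is not a Banach contraction. -/
import Mathlib


noncomputable def l1dist (a b : ℝ × ℝ) : ℝ := |a.1 - b.1| + |a.2 - b.2|

noncomputable def Tmap (x : ℝ × ℝ) : ℝ × ℝ :=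
  if x.1 ≤ x.2 then (x.1, 0) else (0, x.2)

theorem not_banach_contraction :
    ¬ ∃ m : ℝ, 0 ≤ m ∧ m < 1 ∧
      ∀ a ∈ ({(0,0), (4,0), (0,4), (4,5), (5,4)} : Set (ℝ × ℝ)),
        ∀ b ∈ ({(0,0), (4,0), (0,4), (4,5), (5,4)} : Set (ℝ × ℝ)),
          l1dist (Tmap a) (Tmap b) ≤ m * l1dist a b := by
  rintro ⟨m, hm0, hm1, h⟩
  have ha : ((5:ℝ),(4:ℝ)) ∈ ({(0,0), (4,0), (0,4), (4,5), (5,4)} : Set (ℝ × ℝ)) := by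
    simp
  have hb : ((4:ℝ),(5:ℝ)) ∈ ({(0,0), (4,0), (0,4), (4,5), (5,4)} : Set (ℝ × ℝ)) := by
    simp
  have := h _ ha _ hb
  simp only [Tmap, l1dist] at this
  norm_num at this
  linarith
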